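/- Let d ≥ 1 and let σ be a signed permutation of {−d,…,−1,1,…,d}. Let P be the path in ℤ^d with vertex set {0,1}^d whose successive edge directions are σ applied to the directions of G(d). Then: (i) the first vertex a of P satisfies a[j] = flipped(σ^{−1}(j)) for every j ∈ {1,…,d}; (ii) the direction of the vector from the first vertex to the last vertex of P is σ(d); and (iii) the last vertex b of P satisfies b[j] = 1 − a[j] for j = |σ(d)| and b[j] = a[j] for every j ≠ |σ(d)|. -/

import Mathlib

open MeasureTheory

/-! ## Basic objects: points of `ℤ^d` (indexed by coordinates `1,…,d`), directions,
Gray codes, curves on the grid, inflation, well-foldedness, hyperorthogonality. -/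

/-- A point of the grid `ℤ^d`; only coordinates `1,…,d` are meaningful
(coordinate `0` and coordinates `> d` are kept equal to `0`). -/
abbrev Pt : Type := ℕ → ℤ

def ptZero : Pt := fun _ => 0

/-- `flipped i = 1` if `i < 0`, and `0` otherwise. -/
def flipped (i : ℤ) : ℤ := if i < 0 then 1 else 0

/-- Reversal of a free curve (sequence of directions): reverse the order and
negate every direction. -/
def grayRev (l : List ℤ) : List ℤ := (l.map (fun x => -x)).reverse

/-- The Gray-code free curve `G(d)`: `G(0)` is empty and `G(d)` is the
concatenation of `G(d-1)`, the single direction `d`, and the reverse of `G(d-1)`. -/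
def G : ℕ → List ℤ
  | 0 => []
  | d + 1 => G d ++ [((d : ℤ) + 1)] ++ grayRev (G d)

/-- Moving a point one step in direction `e`: coordinate `|e|` changes by `sgn e`. -/
def move (v : Pt) (e : ℤ) : Pt := fun j => if j = e.natAbs then v j + e.sign else v j

/-- The vertices of the path starting at `start` whose successive edge
directions are given by `dirs`. -/
def pathVertices (start : Pt) (dirs : List ℤ) : List Pt := dirs.scanl move start

/-- `e` is a valid direction in `d` dimensions: `e ∈ {−d,…,−1,1,…,d}`. -/
def IsDir (d : ℕ) (e : ℤ) : Prop := e ≠ 0 ∧ e.natAbs ≤ d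

/-- The (ordered) pair `(v,w)` is an edge with direction `e`. -/
def HasDir (d : ℕ) (v w : Pt) (e : ℤ) : Prop := IsDir d e ∧ w = move v e

/-- `(v,w)` is an edge of the grid. -/
def IsEdge (d : ℕ) (v w : Pt) : Prop := ∃ e, HasDir d v w e

/-- A curve on the grid: a finite sequence of distinct points in which each pair of
consecutive points differs by `±1` in exactly one coordinate. -/
def IsGridCurve (d : ℕ) (c : List Pt) : Prop := c.Nodup ∧ c.Chain' (IsEdge d)

/-- Membership in the cube `{0,…,2^k−1}^d` (unused coordinates are `0`). -/
def InCube (d k : ℕ) (v : Pt) : Prop :=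
  (∀ j, 1 ≤ j → j ≤ d → 0 ≤ v j ∧ v j < 2 ^ k) ∧ (∀ j, j = 0 ∨ d < j → v j = 0)

/-- A `k`-curve: a Hamiltonian path on the grid `{0,…,2^k−1}^d`. -/
def IsKCurve (d k : ℕ) (c : List Pt) : Prop :=
  IsGridCurve d c ∧ ∀ v : Pt, v ∈ c ↔ InCube d k v

/-- A signed permutation of `{−d,…,−1,1,…,d}`: a bijection `σ` of this set
with `σ(−k) = −σ(k)` (bundled with its inverse). -/
structure SignedPerm (d : ℕ) where
  f : ℤ → ℤ
  inv : ℤ → ℤ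
  maps : ∀ i : ℤ, IsDir d i → IsDir d (f i)
  maps_inv : ∀ i : ℤ, IsDir d i → IsDir d (inv i)
  neg : ∀ i : ℤ, f (-i) = -f i
  neg_inv : ∀ i : ℤ, inv (-i) = -inv i
  left_inv : ∀ i : ℤ, IsDir d i → inv (f i) = i
  right_inv : ∀ i : ℤ, IsDir d i → f (inv i) = i

/-- The 1-curve `σ(G(d))` (an isometric image of the Gray-code curve) placed in the
cube `2·v + {0,1}^d`; its entry corner is forced to be
`2·v + (flipped(σ⁻¹(1)),…,flipped(σ⁻¹(d)))`. -/
def grayPiece (d : ℕ) (σ : SignedPerm d) (v : Pt) : List Pt :=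
  pathVertices (fun j => 2 * v j + if 1 ≤ j ∧ j ≤ d then flipped (σ.inv (j : ℤ)) else 0)
    ((G d).map σ.f)

/-- `B` is obtained from `A` by (well-folded) inflation: each vertex of `A` is
replaced by an isometric image of `G(d)` in the corresponding subcube, and the
result is a valid curve on the grid. (Reversed images of `G(d)` are themselves
images of `G(d)` under another signed permutation, so no generality is lost.) -/
def IsInflationWF (d : ℕ) (A B : List Pt) : Prop :=
  ∃ σ : ℕ → SignedPerm d,
    B = ((List.range A.length).map (fun i => grayPiece d (σ i) (A.getD i ptZero))).flatten ∧
    IsGridCurve d B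

/-- A curve is well-folded if it is a single vertex or is obtained by inflation from a
well-folded curve, every inserted 1-curve being an isometric image of `G(d)`. -/
inductive WellFolded (d : ℕ) : List Pt → Prop
  | single (v : Pt) : WellFolded d [v]
  | inflate {A B : List Pt} : WellFolded d A → IsInflationWF d A B → WellFolded d B

/-- The set of axes in which `v` and `w` differ (for a grid edge this is the
singleton of its axis). -/
def axesOfEdge (d : ℕ) (v w : Pt) : Finset ℕ :=
  (Finset.range (d + 1)).filter (fun j => v j ≠ w j)

/-- Hyperorthogonality: for every `n ∈ {0,…,d−2}`, every `2^n` consecutive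
edges of the curve have exactly `n+1` distinct axes. -/
def Hyperorthogonal (d : ℕ) (c : List Pt) : Prop :=
  ∀ n, n ≤ d - 2 → ∀ s, s + 2 ^ n + 1 ≤ c.length →
    ((Finset.range (2 ^ n)).biUnion
      (fun t => axesOfEdge d (c.getD (s + t) ptZero) (c.getD (s + t + 1) ptZero))).card = n + 1

/-- The depth of a direction `a` in a signed permutation `σ`:
`0` if `|a| ∈ {|σ(d)|,|σ(d−1)|}`, and otherwise the number `j` with `|σ(d−1−j)| = |a|`. -/
def depth (d : ℕ) (σ : SignedPerm d) (a : ℤ) : ℕ :=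
  if (σ.inv a).natAbs = d ∨ (σ.inv a).natAbs = d - 1 then 0 else d - 1 - (σ.inv a).natAbs

/-- The (signed) direction of the edge from `v` to `w`
(for a grid edge with axis `j` this is `±j`). -/
def dirOf (d : ℕ) (v w : Pt) : ℤ :=
  ∑ j ∈ (Finset.range (d + 1)).filter (fun j => v j ≠ w j), (j : ℤ) * (w j - v j)

/-- The axis of the edge from `v` to `w`. -/
def axisOf (d : ℕ) (v w : Pt) : ℕ := (dirOf d v w).natAbs

/-! ## Extended curves -/

/-- For the extended curve with entry-edge direction `en`, vertex list `c` and
exit-edge direction `ex`, the axis of its `t`-th edge, where the entry edge has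
index `0`, the internal edges have indices `1,…,c.length − 1` (edge `t` joins
`c[t−1]` and `c[t]`) and the exit edge has index `c.length`. -/
def axE (d : ℕ) (en : ℤ) (c : List Pt) (ex : ℤ) (t : ℕ) : ℕ :=
  if t = 0 then en.natAbs
  else if t = c.length then ex.natAbs
  else axisOf d (c.getD (t - 1) ptZero) (c.getD t ptZero)

/-- The edge distance of the axis `a` to the vertex with index `p` within the
extended curve `(en, c, ex)`: one less than the number of edges of the smallest
contiguous subcurve containing this vertex and an edge with axis `a`. -/
noncomputable def edgedistE (d : ℕ) (en : ℤ) (c : List Pt) (ex : ℤ) (p a : ℕ) : ℕ :=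
  sInf {m | ∃ t, t ≤ c.length ∧ axE d en c ex t = a ∧
    m = if t ≤ p then p - t else t - p - 1}

/-- Hyperorthogonality of an extended curve: every `2^n` consecutive edges
(including the entry and exit edges) have exactly `n+1` distinct axes, for all
`n ∈ {0,…,d−2}`. -/
def HyperorthogonalE (d : ℕ) (en : ℤ) (c : List Pt) (ex : ℤ) : Prop :=
  ∀ n, n ≤ d - 2 → ∀ s, s + 2 ^ n ≤ c.length + 1 →
    ((Finset.range (2 ^ n)).image (fun t => axE d en c ex (s + t))).card = n + 1

/-- The sequence of approximating curves determined by a system of signed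
permutations `σ k i` (one for each vertex `i` of the `k`-th curve):
`A_0` is the single vertex at the origin and `A_{k+1}` is obtained from `A_k` by
inflation, vertex `i` being replaced by the 1-curve `σ_{k,i}(G(d))`. -/
def buildCurve (d : ℕ) (σ : ℕ → ℕ → SignedPerm d) : ℕ → List Pt
  | 0 => [ptZero]
  | k + 1 =>
    ((List.range (buildCurve d σ k).length).map
      (fun i => grayPiece d (σ k i) ((buildCurve d σ k).getD i ptZero))).flatten

/-- `f : [0,1] → [0,1]^d` is the space-filling curve approximated by the curves
`A k`: the `i`-th vertex of `A k` corresponds to the cube `2^{−k}(v_{k,i} + [0,1]^d)`,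
and `f` maps `[i/2^{dk},(i+1)/2^{dk}]` into that cube. -/
def Approximates (d : ℕ) (A : ℕ → List Pt) (f : ℝ → Fin d → ℝ) : Prop :=
  ∀ k i, i < (A k).length → ∀ t : ℝ,
    (i : ℝ) / 2 ^ (d * k) ≤ t → t ≤ ((i : ℝ) + 1) / 2 ^ (d * k) →
    ∀ j : Fin d,
      ((((A k).getD i ptZero) ((j : ℕ) + 1) : ℝ) / 2 ^ k ≤ f t j ∧
        f t j ≤ ((((A k).getD i ptZero) ((j : ℕ) + 1) : ℝ) + 1) / 2 ^ k)

/-- The smallest axis-aligned box containing a (nonempty, bounded) set `S ⊆ ℝ^d`. -/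
noncomputable def bbox (d : ℕ) (S : Set (Fin d → ℝ)) : Set (Fin d → ℝ) :=
  Set.univ.pi fun j => Set.Icc (sInf ((fun p => p j) '' S)) (sSup ((fun p => p j) '' S))

/-! ## General inflation (arbitrary 1-curves), isometric copies, self-similarity -/

/-- `c` is a 1-curve on the translated unit cube `2·base + {0,1}^d`. -/
def IsUnitCurveAt (d : ℕ) (base : Pt) (c : List Pt) : Prop :=
  IsGridCurve d c ∧
    ∀ v : Pt, v ∈ c ↔
      ((∀ j, 1 ≤ j → j ≤ d → v j = 2 * base j ∨ v j = 2 * base j + 1) ∧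
        ∀ j, j = 0 ∨ d < j → v j = 2 * base j)

/-- `B` is obtained from `A` by (general) inflation: each vertex `v_i` of `A` is
replaced by a 1-curve on `2·v_i + {0,1}^d`, and each edge of `A` with direction `e_i`
is replaced by an edge of the same direction connecting consecutive 1-curves. -/
def IsInflation (d : ℕ) (A B : List Pt) : Prop :=
  ∃ C : ℕ → List Pt,
    B = ((List.range A.length).map C).flatten ∧
    IsGridCurve d B ∧
    (∀ i, i < A.length → IsUnitCurveAt d (A.getD i ptZero) (C i)) ∧
    (∀ i, i + 1 < A.length → ∀ e : ℤ,
      HasDir d (A.getD i ptZero) (A.getD (i + 1) ptZero) e →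
      HasDir d ((C i).getLastD ptZero) ((C (i + 1)).headD ptZero) e)

/-- `InflationChain d k X`: `X` is constructed from a single vertex by `k` steps
of inflation. -/
inductive InflationChain (d : ℕ) : ℕ → List Pt → Prop
  | base (v : Pt) : InflationChain d 0 [v]
  | step {k : ℕ} {A B : List Pt} :
      InflationChain d k A → IsInflation d A B → InflationChain d (k + 1) B

/-- The hyperoctahedral symmetry of the cube `{0,…,M}^d` given by the signed
permutation `σ`: the coordinate `|σ⁻¹(j)|` of the argument is sent to coordinate `j`,
reflected (`x ↦ M − x`) whenever `σ⁻¹(j) < 0`. -/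
def applySP (d : ℕ) (M : ℤ) (σ : SignedPerm d) (x : Pt) : Pt :=
  fun j =>
    if 1 ≤ j ∧ j ≤ d then
      if 0 ≤ σ.inv (j : ℤ) then x (σ.inv (j : ℤ)).natAbs
      else M - x (σ.inv (j : ℤ)).natAbs
    else x j

/-- `B` is an isometric copy of the curve `A` (living in a cube `{0,…,M}^d`):
a hyperoctahedral symmetry, possibly composed with reversal, followed by a translation. -/
def IsometricCopy (d : ℕ) (M : ℤ) (A B : List Pt) : Prop :=
  ∃ σ : SignedPerm d, ∃ rev : Bool, ∃ tr : Pt,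
    B = (if rev then A.reverse else A).map (fun v => fun j => applySP d M σ v j + tr j)

/-- Self-similarity of one approximation step: `B` is the concatenation of `2^d`
isometric copies of the `k`-curve `A`, connected by single edges. -/
def SelfSimilarStep (d k : ℕ) (A B : List Pt) : Prop :=
  ∃ parts : ℕ → List Pt,
    B = ((List.range (2 ^ d)).map parts).flatten ∧
    IsGridCurve d B ∧
    ∀ m, m < 2 ^ d → IsometricCopy d ((2 : ℤ) ^ k - 1) A (parts m)

/-- Coordinate `a ∈ {1,…,d}` of a point of `ℝ^d`. -/
noncomputable def coordR (d : ℕ) (x : Fin d → ℝ) (a : ℕ) : ℝ :=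
  if h : a - 1 < d then x ⟨a - 1, h⟩ else 0

/-- The hyperoctahedral symmetry of the unit cube `[0,1]^d` given by the signed
permutation `σ`. -/
noncomputable def applySPR (d : ℕ) (σ : SignedPerm d) (x : Fin d → ℝ) : Fin d → ℝ :=
  fun j =>
    if 0 ≤ σ.inv ((j : ℕ) + 1 : ℤ) then coordR d x (σ.inv ((j : ℕ) + 1 : ℤ)).natAbs
    else 1 - coordR d x (σ.inv ((j : ℕ) + 1 : ℤ)).natAbs

/-- `f` is a self-similar hyperorthogonal well-folded space-filling curve:
it is approximated by a sequence of `k`-curves, starting from a single vertex,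
in which each curve is obtained from the previous one by well-folded inflation,
all approximating curves are hyperorthogonal, and each approximating curve is the
concatenation of `2^d` isometric copies of the previous one. -/
def SSHOWFcurve (d : ℕ) (f : ℝ → Fin d → ℝ) : Prop :=
  ∃ A : ℕ → List Pt,
    A 0 = [ptZero] ∧
    (∀ k, IsInflationWF d (A k) (A (k + 1))) ∧
    (∀ k, IsKCurve d k (A k)) ∧
    (∀ k, Hyperorthogonal d (A k)) ∧
    (∀ k, SelfSimilarStep d k (A k) (A (k + 1))) ∧
    Approximates d A f

/-- Two space-filling curves are the same up to hyperoctahedral symmetry and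
reversal. -/
def curveEquiv (d : ℕ) (f g : ℝ → Fin d → ℝ) : Prop :=
  ∃ τ : SignedPerm d,
    (∀ t ∈ Set.Icc (0 : ℝ) 1, g t = applySPR d τ (f t)) ∨
    (∀ t ∈ Set.Icc (0 : ℝ) 1, g t = applySPR d τ (f (1 - t)))

/-- The direction of the entry edge of the extended child curve `C'_m` within the
inflation of the extended curve `(e0, A, e1)`. -/
def childEntryDir (d : ℕ) (A : List Pt) (e0 : ℤ) (m : ℕ) : ℤ :=
  if m = 0 then e0 else dirOf d (A.getD (m - 1) ptZero) (A.getD m ptZero)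

/-- The direction of the exit edge of the extended child curve `C'_m` within the
inflation of the extended curve `(e0, A, e1)`. -/
def childExitDir (d : ℕ) (A : List Pt) (e1 : ℤ) (m : ℕ) : ℤ :=
  if m + 1 = A.length then e1 else dirOf d (A.getD m ptZero) (A.getD (m + 1) ptZero)

/-- The local edge distance of the axis `a` to the vertex with index `i` within the
extended approximating curve `A'_k` (entry direction `e0`, exit direction `e1`)
of the system `σ`: the edge distance within the extended child curve of `A'_{k-1}`
containing this vertex. -/
noncomputable def led (d : ℕ) (σ : ℕ → ℕ → SignedPerm d) (e0 e1 : ℤ) :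
    ℕ → ℕ → ℕ → ℕ
  | 0, _, a => edgedistE d e0 (buildCurve d σ 0) e1 0 a
  | k + 1, i, a =>
    edgedistE d (childEntryDir d (buildCurve d σ k) e0 (i / 2 ^ d))
      (grayPiece d (σ k (i / 2 ^ d)) ((buildCurve d σ k).getD (i / 2 ^ d) ptZero))
      (childExitDir d (buildCurve d σ k) e1 (i / 2 ^ d))
      (i % 2 ^ d) a

/-- The system of permutations `σ` describes a sequence of extended hyperorthogonal
well-folded approximating curves with entry direction `e0` and exit direction `e1`,
in which the signs of `σ_{k,1}⁻¹` are prescribed by `s`, and the elements of every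
unsigned permutation `|σ_{k,i}|` are sorted by decreasing local edge distance. -/
def GoodSystem (d : ℕ) (e0 e1 : ℤ) (s : ℕ → ℕ → ℤ) (σ : ℕ → ℕ → SignedPerm d) : Prop :=
  (∀ k, IsKCurve d k (buildCurve d σ k)) ∧
  (∀ k, HyperorthogonalE d e0 (buildCurve d σ k) e1) ∧
  (∀ k, ¬ InCube d k (move ((buildCurve d σ k).headD ptZero) (-e0))) ∧
  (∀ k, ¬ InCube d k (move ((buildCurve d σ k).getLastD ptZero) e1)) ∧
  (∀ k j, 1 ≤ j → j ≤ d → Int.sign ((σ k 0).inv (j : ℤ)) = s k j) ∧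
  (∀ k i, i < (buildCurve d σ k).length →
    ∀ p q : ℕ, 1 ≤ p → p ≤ q → q ≤ d →
      led d σ e0 e1 k i (((σ k i).f (q : ℤ)).natAbs) ≤
        led d σ e0 e1 k i (((σ k i).f (p : ℤ)).natAbs))

/-- The Butz-Moore generalization of the Hilbert curve, described by the conditions
on its system of signed permutations: `|σ_{k,i}(d)| = 1` for the first and last
subcube, `|σ_{k,i}(d)| = max(|e_{k,i−1}|,|e_{k,i}|)` in between, all unsigned
permutations are cyclic rotations, and the entry is at the origin. -/
def ButzMoore (d : ℕ) (σ : ℕ → ℕ → SignedPerm d) : Prop :=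
  (∀ k, IsKCurve d k (buildCurve d σ k)) ∧
  (∀ k i, i < 2 ^ (d * k) → (i = 0 ∨ i = 2 ^ (d * k) - 1) →
    ((σ k i).f (d : ℤ)).natAbs = 1) ∧
  (∀ k i, 0 < i → i + 1 < 2 ^ (d * k) →
    ((σ k i).f (d : ℤ)).natAbs =
      max (dirOf d ((buildCurve d σ k).getD (i - 1) ptZero)
            ((buildCurve d σ k).getD i ptZero)).natAbs
          (dirOf d ((buildCurve d σ k).getD i ptZero)
            ((buildCurve d σ k).getD (i + 1) ptZero)).natAbs) ∧
  (∀ k i j, 1 ≤ j → j ≤ d →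
    ((σ k i).f (j : ℤ)).natAbs = ((((σ k i).f (d : ℤ)).natAbs + j - 1) % d) + 1) ∧
  (∀ k j, 1 ≤ j → j ≤ d → 0 ≤ (σ k 0).inv (j : ℤ))

/-! ## Generalized curves (diagonal edges allowed) -/

/-- A generalized edge: `w ≠ v` and every coordinate changes by at most 1. -/
def IsGenEdge (d : ℕ) (v w : Pt) : Prop :=
  v ≠ w ∧ (∀ j, 1 ≤ j → j ≤ d → |w j - v j| ≤ 1) ∧ ∀ j, j = 0 ∨ d < j → w j = v j

/-- A generalized curve on the grid (diagonal edges allowed). -/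
def IsGenCurve (d : ℕ) (c : List Pt) : Prop := c.Nodup ∧ c.Chain' (IsGenEdge d)

/-- Generalized inflation: vertices are replaced by 1-curves on the corresponding
subcubes, consecutive 1-curves being joined by a single (possibly diagonal) edge. -/
def IsGenInflation (d : ℕ) (A B : List Pt) : Prop :=
  ∃ C : ℕ → List Pt,
    B = ((List.range A.length).map C).flatten ∧
    IsGenCurve d B ∧
    (∀ i, i < A.length → IsUnitCurveAt d (A.getD i ptZero) (C i))

section GrayEndpointsAux

lemma scanl_getLast?_move (l : List ℤ) (a : Pt) :
    (List.scanl move a l).getLast? = some (l.foldl move a) := by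
  induction l generalizing a with
  | nil => rfl
  | cons e l ih =>
    rw [List.scanl_cons, List.foldl_cons, ← ih (move a e)]
    cases l <;> simp [List.scanl]

lemma foldl_mem_scanl (l1 l2 : List ℤ) (a : Pt) :
    (l1.foldl move a) ∈ List.scanl move a (l1 ++ l2) := by
  induction l1 generalizing a with
  | nil => cases l2 <;> simp [List.scanl]
  | cons e l ih => simpa using List.mem_cons_of_mem _ (ih (move a e))

lemma foldl_coord (l : List ℤ) (a : Pt) (j : ℕ) (h : ∀ e ∈ l, e.natAbs ≠ j) :
    l.foldl move a j = a j := by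
  induction l generalizing a with
  | nil => rfl
  | cons e l ih =>
    rw [List.foldl_cons, ih _ (fun e he => h e (List.mem_cons_of_mem _ he))]
    simp [move, Ne.symm (h e List.mem_cons_self)]

lemma G_mem (d : ℕ) : ∀ e ∈ G d, 1 ≤ e.natAbs ∧ e.natAbs ≤ d := by
  induction d with
  | zero => simp [G]
  | succ d ih =>
    intro e he
    simp only [G, grayRev, List.mem_append, List.mem_reverse, List.mem_map,
      List.mem_singleton] at he
    rcases he with (he | he) | ⟨x, hx, rfl⟩
    · exact ⟨(ih e he).1, (ih e he).2.trans (Nat.le_succ d)⟩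
    · subst he
      rw [show ((d:ℤ)+1) = ((d+1:ℕ):ℤ) by push_cast; ring, Int.natAbs_natCast]
      omega
    · simpa using ⟨(ih x hx).1, (ih x hx).2.trans (Nat.le_succ d)⟩

lemma G_prefix (d i : ℕ) (h1 : 1 ≤ i) (h2 : i ≤ d) :
    ∃ q, G d = G (i-1) ++ (i:ℤ) :: q := by
  induction d with
  | zero => omega
  | succ d ih =>
    rcases Nat.lt_or_ge i (d+1) with h | h
    · obtain ⟨q, hq⟩ := ih (by omega)
      exact ⟨q ++ [((d:ℤ)+1)] ++ grayRev (G d), by simp [G, hq]⟩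
    · have : i = d + 1 := by omega
      subst this
      refine ⟨grayRev (G d), ?_⟩
      simp [G]

def disp (l : List ℤ) (j : ℕ) : ℤ :=
  (l.map (fun e => if e.natAbs = j then e.sign else 0)).sum

lemma foldl_eq_disp (l : List ℤ) (a : Pt) : l.foldl move a = fun j => a j + disp l j := by
  induction l generalizing a with
  | nil => funext j; simp [disp]
  | cons e l ih =>
    funext j
    rw [List.foldl_cons, ih]
    simp only [disp, List.map_cons, List.sum_cons, move]
    by_cases h : j = e.natAbs <;> simp [h, Ne.symm] <;> ring_nf

lemma disp_append (l1 l2 : List ℤ) (j : ℕ) : disp (l1 ++ l2) j = disp l1 j + disp l2 j := by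
  simp [disp]

lemma disp_grayRev (l : List ℤ) (j : ℕ) : disp (grayRev l) j = - disp l j := by
  induction l with
  | nil => simp [disp, grayRev]
  | cons e l ih =>
    have h : grayRev (e :: l) = grayRev l ++ [-e] := by simp [grayRev]
    rw [h, disp_append, ih]
    simp [disp]
    by_cases h : e.natAbs = j <;> simp [h]

lemma map_grayRev (f : ℤ → ℤ) (hf : ∀ x, f (-x) = - f x) (l : List ℤ) :
    (grayRev l).map f = grayRev (l.map f) := by
  simp only [grayRev, List.map_reverse, List.map_map]
  congr 1
  exact List.map_congr_left (fun x _ => by simp [Function.comp, hf])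

end GrayEndpointsAux

/-- Let `σ` be a signed permutation and let `P` be the path on
`{0,1}^d` whose edge directions are `σ` applied to the directions of `G(d)`.
Then (i) the first vertex `a` satisfies `a[j] = flipped(σ⁻¹(j))`;
(ii) the vector from the first to the last vertex has direction `σ(d)`;
(iii) the last vertex `b` satisfies `b[j] = 1 − a[j]` for `j = |σ(d)|`,
and `b[j] = a[j]` otherwise. -/
theorem gray_image_endpoints (d : ℕ) (hd : 1 ≤ d) (σ : SignedPerm d) (a : Pt)
    (hsupp : ∀ j, j = 0 ∨ d < j → a j = 0)
    (hset : ∀ v : Pt, v ∈ pathVertices a ((G d).map σ.f) ↔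
      ((∀ j, 1 ≤ j → j ≤ d → v j = 0 ∨ v j = 1) ∧ ∀ j, j = 0 ∨ d < j → v j = 0)) :
    (∀ j, 1 ≤ j → j ≤ d → a j = flipped (σ.inv (j : ℤ))) ∧
    ∀ b : Pt, (pathVertices a ((G d).map σ.f)).getLast? = some b →
      (b = move a (σ.f (d : ℤ)) ∧
        ∀ j, 1 ≤ j → j ≤ d →
          (j = (σ.f (d : ℤ)).natAbs → b j = 1 - a j) ∧
          (j ≠ (σ.f (d : ℤ)).natAbs → b j = a j)) := by
  classical
  set L := (G d).map σ.f with hL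
  have hcube : ∀ p s : List ℤ, L = p ++ s →
      ∀ j, 1 ≤ j → j ≤ d → (p.foldl move a) j = 0 ∨ (p.foldl move a) j = 1 := by
    intro p s hps j h1 h2
    have hm : p.foldl move a ∈ pathVertices a L := by
      rw [hps]; exact foldl_mem_scanl p s a
    exact ((hset _).mp hm).1 j h1 h2
  have hdir_coe : ∀ j : ℕ, 1 ≤ j → j ≤ d → IsDir d (j:ℤ) := by
    intro j h1 h2
    refine ⟨?_, by simpa using h2⟩
    exact_mod_cast (by omega : j ≠ 0)
  have part1 : ∀ j, 1 ≤ j → j ≤ d → a j = flipped (σ.inv (j : ℤ)) := by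
    intro j h1 h2
    have hdj := hdir_coe j h1 h2
    have hinv := σ.maps_inv _ hdj
    set i := (σ.inv (j:ℤ)).natAbs with hi
    have hi1 : 1 ≤ i := Int.natAbs_pos.mpr hinv.1
    have hi2 : i ≤ d := hinv.2
    obtain ⟨q, hq⟩ := G_prefix d i hi1 hi2
    have hax : ∀ x : ℤ, x ≠ 0 → x.natAbs ≤ d → (σ.f x).natAbs = j → x.natAbs = i := by
      intro x hx0 hxd habs
      have hlx := σ.left_inv x ⟨hx0, hxd⟩
      rcases Int.natAbs_eq_iff.mp habs with hfx | hfx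
      · rw [← hlx, hfx]
      · rw [← hlx, hfx, σ.neg_inv, Int.natAbs_neg]
    have hLsplit : L = ((G (i-1)).map σ.f ++ [σ.f (i:ℤ)]) ++ (q.map σ.f) := by
      rw [hL, hq]; simp
    set v1 := ((G (i-1)).map σ.f).foldl move a with hv1def
    have hv1j : v1 j = a j := by
      apply foldl_coord
      intro e he
      obtain ⟨x, hx, rfl⟩ := List.mem_map.mp he
      intro hcon
      have hxb := G_mem (i-1) x hx
      have hxd : x.natAbs ≤ d := le_trans hxb.2 (by omega)
      have := hax x (Int.natAbs_pos.mp (by omega)) hxd hcon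
      omega
    have hfi : ((i:ℤ) = σ.inv (j:ℤ) ∧ σ.f (i:ℤ) = (j:ℤ)) ∨
        ((i:ℤ) = -(σ.inv (j:ℤ)) ∧ σ.f (i:ℤ) = -(j:ℤ)) := by
      rcases le_or_gt 0 (σ.inv (j:ℤ)) with hpos | hneg
      · left
        have he1 : (i:ℤ) = σ.inv (j:ℤ) := by rw [hi]; exact Int.natAbs_of_nonneg hpos
        exact ⟨he1, by rw [he1, σ.right_inv _ hdj]⟩
      · right
        have he1 : (i:ℤ) = -(σ.inv (j:ℤ)) := by
          rw [hi]; exact Int.ofNat_natAbs_of_nonpos (le_of_lt hneg)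
        refine ⟨he1, ?_⟩
        rw [he1, σ.neg, σ.right_inv _ hdj]
    have hnatabs_fi : (σ.f (i:ℤ)).natAbs = j := by
      rcases hfi with ⟨_, h⟩ | ⟨_, h⟩ <;> rw [h] <;> simp
    set v2 := move v1 (σ.f (i:ℤ)) with hv2def
    have hv2j : v2 j = v1 j + (σ.f (i:ℤ)).sign := by
      rw [hv2def]; simp [move, hnatabs_fi]
    have hmem1 : v1 j = 0 ∨ v1 j = 1 := by
      refine hcube ((G (i-1)).map σ.f) (σ.f (i:ℤ) :: q.map σ.f) ?_ j h1 h2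
      rw [hLsplit]; simp
    have hmem2 : v2 j = 0 ∨ v2 j = 1 := by
      have hfold : ((G (i-1)).map σ.f ++ [σ.f (i:ℤ)]).foldl move a = v2 := by
        rw [List.foldl_append]; rfl
      have := hcube ((G (i-1)).map σ.f ++ [σ.f (i:ℤ)]) (q.map σ.f) hLsplit j h1 h2
      rwa [hfold] at this
    rcases hfi with ⟨hiq, h⟩ | ⟨hiq, h⟩
    · have hsign : (σ.f (i:ℤ)).sign = 1 := by
        rw [h]; exact Int.sign_eq_one_iff_pos.mpr (by exact_mod_cast h1)
      have hflip : flipped (σ.inv (j:ℤ)) = 0 := by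
        unfold flipped; rw [if_neg]; omega
      omega
    · have hsign : (σ.f (i:ℤ)).sign = -1 := by
        rw [h]
        refine Int.sign_eq_neg_one_iff_neg.mpr ?_
        have : (1:ℤ) ≤ (j:ℤ) := by exact_mod_cast h1
        omega
      have hflip : flipped (σ.inv (j:ℤ)) = 1 := by
        unfold flipped; rw [if_pos]; omega
      omega
  refine ⟨part1, ?_⟩
  intro b hb
  have hbfold : b = L.foldl move a := by
    have hgl := scanl_getLast?_move L a
    have : some (L.foldl move a) = some b := by rw [← hgl]; exact hb
    exact (Option.some.inj this).symm
  obtain ⟨m, hm⟩ : ∃ m, d = m + 1 := ⟨d - 1, by omega⟩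
  have hcast : ((m:ℤ)+1) = ((d:ℕ):ℤ) := by rw [hm]; push_cast; ring
  have hGd : G d = G m ++ [((d:ℕ):ℤ)] ++ grayRev (G m) := by
    subst hm; push_cast; rfl
  have hbeq : b = move a (σ.f (d : ℤ)) := by
    rw [hbfold, foldl_eq_disp]
    funext j
    have hdispL : disp L j = disp [σ.f (d:ℤ)] j := by
      rw [hL, hGd]
      rw [List.map_append, List.map_append, map_grayRev σ.f σ.neg]
      simp only [List.map_cons, List.map_nil]
      rw [disp_append, disp_append, disp_grayRev]
      ring
    rw [hdispL]
    simp only [disp, List.map_cons, List.map_nil, List.sum_cons, List.sum_nil, move]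
    by_cases hcase : j = (σ.f (d:ℤ)).natAbs
    · simp [hcase]
    · simp [hcase, Ne.symm hcase]
  refine ⟨hbeq, ?_⟩
  have hdd : IsDir d (d:ℤ) := hdir_coe d hd le_rfl
  have hfd : IsDir d (σ.f (d:ℤ)) := σ.maps _ hdd
  intro j h1 h2
  constructor
  · intro hjeq
    have haj : a j = 0 ∨ a j = 1 := by
      have := hcube [] L (by simp) j h1 h2
      simpa using this
    have hbj : b j = 0 ∨ b j = 1 := by
      have := hcube L [] (by simp) j h1 h2
      rw [← hbfold] at this
      exact this
    have hsign : (σ.f (d:ℤ)).sign = 1 ∨ (σ.f (d:ℤ)).sign = -1 := by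
      rcases lt_trichotomy (σ.f (d:ℤ)) 0 with h|h|h
      · right; exact Int.sign_eq_neg_one_iff_neg.mpr h
      · exact absurd h hfd.1
      · left; exact Int.sign_eq_one_iff_pos.mpr h
    have hbj2 : b j = a j + (σ.f (d:ℤ)).sign := by
      rw [hbeq]; simp [move, hjeq]
    omega
  · intro hjne
    rw [hbeq]; simp [move, hjne]
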